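/- Let a, b > 0 with b/(4a) < exp(−1). Then there exist real numbers s₁, s₂ with 0 < s₁ < s₂ such that g_{a,b}(s₁) = 0, g_{a,b}(s₂) = 0, g_{a,b}(s) < 0 for all s ∈ (0, s₁) ∪ (s₂, ∞), and g_{a,b}(s) > 0 for all s ∈ (s₁, s₂). -/

import Mathlib

/-- The effective ionization rate `g_{a,b}(s) = a * s * exp (-b/s) - s^2/4`. -/
noncomputable def gab (a b s : ℝ) : ℝ := a * s * Real.exp (-b / s) - s ^ 2 / 4

noncomputable def Fab (a b s : ℝ) : ℝ := Real.log (4 * a) - Real.log s - b / s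

lemma gab_eq_Fab (a b s : ℝ) (ha : 0 < a) (hs : 0 < s) :
    gab a b s = s ^ 2 / 4 * (Real.exp (Fab a b s) - 1) := by
  have h4a : (0:ℝ) < 4 * a := by linarith
  have h : Real.exp (Fab a b s) = 4 * a / s * Real.exp (-b / s) := by
    unfold Fab
    rw [sub_sub, Real.exp_sub, Real.exp_add, Real.exp_log h4a, Real.exp_log hs]
    rw [neg_div]
    ring_nf
    rw [Real.exp_neg]
  rw [h]
  unfold gab
  field_simp

lemma Fab_strictMonoOn (a b : ℝ) (hb : 0 < b) :
    StrictMonoOn (Fab a b) (Set.Ioc 0 b) := by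
  intro x hx y hy hxy
  obtain ⟨hx0, hxb⟩ := hx
  obtain ⟨hy0, hyb⟩ := hy
  have h1 : Real.log y - Real.log x < (y - x) / x := by
    have h := Real.log_lt_sub_one_of_pos (div_pos hy0 hx0) (by
      intro h; exact absurd ((div_eq_one_iff_eq hx0.ne').1 h) (ne_of_gt hxy))
    rw [Real.log_div hy0.ne' hx0.ne'] at h
    have hxx : y / x - 1 = (y - x) / x := by field_simp
    linarith [hxx ▸ h]
  have key : (y - x) / x ≤ b / x - b / y := by
    rw [div_sub_div _ _ hx0.ne' hy0.ne', div_le_div_iff₀ hx0 (mul_pos hx0 hy0)]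
    nlinarith [mul_nonneg (mul_nonneg (sub_nonneg.2 hxy.le) hx0.le) (sub_nonneg.2 hyb)]
  unfold Fab
  linarith

lemma Fab_strictAntiOn (a b : ℝ) (hb : 0 < b) :
    StrictAntiOn (Fab a b) (Set.Ici b) := by
  intro x hx y hy hxy
  have hx0 : 0 < x := lt_of_lt_of_le hb hx
  have hy0 : 0 < y := lt_of_lt_of_le hb hy
  have h1 : (y - x) / y < Real.log y - Real.log x := by
    have h := Real.log_lt_sub_one_of_pos (div_pos hx0 hy0) (by
      intro h; exact absurd ((div_eq_one_iff_eq hy0.ne').1 h) (ne_of_lt hxy))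
    rw [Real.log_div hx0.ne' hy0.ne'] at h
    have hxx : x / y - 1 = -((y - x) / y) := by field_simp; ring
    linarith [hxx ▸ h]
  have key : b / x - b / y ≤ (y - x) / y := by
    rw [div_sub_div _ _ hx0.ne' hy0.ne', div_le_div_iff₀ (mul_pos hx0 hy0) hy0]
    nlinarith [mul_nonneg (mul_nonneg (sub_nonneg.2 hxy.le) hy0.le) (sub_nonneg.2 hx)]
  unfold Fab
  linarith

lemma Fab_continuousOn (a b : ℝ) : ContinuousOn (Fab a b) (Set.Ioi 0) := by
  unfold Fab
  apply ContinuousOn.sub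
  · apply ContinuousOn.sub continuousOn_const
    exact Real.continuousOn_log.mono (fun x hx => by simpa using (ne_of_gt hx))
  · exact ContinuousOn.div continuousOn_const continuousOn_id (fun x hx => ne_of_gt hx)

lemma gab_neg_of_Fab_neg (a b s : ℝ) (ha : 0 < a) (hs : 0 < s) (h : Fab a b s < 0) :
    gab a b s < 0 := by
  rw [gab_eq_Fab a b s ha hs]
  have : Real.exp (Fab a b s) < 1 := by
    calc Real.exp (Fab a b s) < Real.exp 0 := Real.exp_lt_exp.2 h
    _ = 1 := Real.exp_zero
  have hq : (0:ℝ) < s ^ 2 / 4 := by positivity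
  nlinarith

lemma gab_pos_of_Fab_pos (a b s : ℝ) (ha : 0 < a) (hs : 0 < s) (h : 0 < Fab a b s) :
    0 < gab a b s := by
  rw [gab_eq_Fab a b s ha hs]
  have : (1:ℝ) < Real.exp (Fab a b s) := by
    calc (1:ℝ) = Real.exp 0 := Real.exp_zero.symm
    _ < _ := Real.exp_lt_exp.2 h
  have hq : (0:ℝ) < s ^ 2 / 4 := by positivity
  nlinarith

lemma gab_zero_of_Fab_zero (a b s : ℝ) (ha : 0 < a) (hs : 0 < s) (h : Fab a b s = 0) :
    gab a b s = 0 := by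
  rw [gab_eq_Fab a b s ha hs, h, Real.exp_zero]
  ring

/-- If `b / (4 a) < exp (-1)` then `g_{a,b}` is positive exactly on a finite
interval `(s₁, s₂)` of positive reals, vanishing at the endpoints and negative
elsewhere on `(0, ∞)`. -/
theorem gab_positive_hump (a b : ℝ) (ha : 0 < a) (hb : 0 < b)
    (hr : b / (4 * a) < Real.exp (-1)) :
    ∃ s₁ s₂ : ℝ, 0 < s₁ ∧ s₁ < s₂ ∧
      gab a b s₁ = 0 ∧ gab a b s₂ = 0 ∧
      (∀ s : ℝ, (0 < s ∧ s < s₁) ∨ s₂ < s → gab a b s < 0) ∧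
      (∀ s : ℝ, s₁ < s → s < s₂ → 0 < gab a b s) := by
  have h4a : (0:ℝ) < 4 * a := by linarith
  set c := Real.log (4 * a) with hc
  set m := max c 1 with hm
  have hm1 : (1:ℝ) ≤ m := le_max_right _ _
  have hm0 : (0:ℝ) < m := by linarith
  set s₀ := min (b ^ 2 / 16) (min (b / 2) (1 / m ^ 2)) with hs₀
  have hs₀pos : 0 < s₀ := by
    apply lt_min (by positivity) (lt_min (by positivity) (by positivity))
  have hs₀b : s₀ < b := lt_of_le_of_lt ((min_le_right _ _).trans (min_le_left _ _)) (by linarith)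
  -- F s₀ < 0
  set t := Real.sqrt s₀ with ht
  have htpos : 0 < t := Real.sqrt_pos.2 hs₀pos
  have hts : t ^ 2 = s₀ := Real.sq_sqrt hs₀pos.le
  have hFs₀ : Fab a b s₀ < 0 := by
    have hlogt : -Real.log t ≤ 1 / t - 1 := by
      have := Real.log_le_sub_one_of_pos (show (0:ℝ) < 1 / t by positivity)
      rw [one_div, Real.log_inv] at this
      rw [one_div]
      exact this
    have hlog : -Real.log s₀ ≤ 2 / t - 2 := by
      have : Real.log s₀ = 2 * Real.log t := by
        rw [← hts]; rw [show t ^ 2 = t * t by ring, Real.log_mul htpos.ne' htpos.ne']; ring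
      rw [this]
      have h2 : 2 / t = 2 * (1 / t) := by ring
      linarith
    have htb : t ≤ b / 4 := by
      have h1 : s₀ ≤ b ^ 2 / 16 := min_le_left _ _
      have h2 : Real.sqrt (b ^ 2 / 16) = b / 4 := by
        rw [show b ^ 2 / 16 = (b / 4) ^ 2 by ring, Real.sqrt_sq (by positivity)]
      calc t ≤ Real.sqrt (b ^ 2 / 16) := Real.sqrt_le_sqrt h1
      _ = b / 4 := h2
    have hbs : 4 / t ≤ b / s₀ := by
      rw [← hts, show t ^ 2 = t * t by ring]
      rw [div_le_div_iff₀ htpos (by positivity)]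
      nlinarith
    have htm : t ≤ 1 / m := by
      have h1 : s₀ ≤ 1 / m ^ 2 := (min_le_right _ _).trans (min_le_right _ _)
      have h2 : Real.sqrt (1 / m ^ 2) = 1 / m := by
        rw [show (1:ℝ) / m ^ 2 = (1 / m) ^ 2 by ring, Real.sqrt_sq (by positivity)]
      calc t ≤ Real.sqrt (1 / m ^ 2) := Real.sqrt_le_sqrt h1
      _ = 1 / m := h2
    have hmt : m ≤ 1 / t := by
      rw [le_div_iff₀ htpos]
      rw [div_eq_mul_inv] at htm
      calc m * t ≤ m * (1 * m⁻¹) := by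
            apply mul_le_mul_of_nonneg_left htm hm0.le
      _ = 1 := by field_simp
    have hcm : c ≤ m := le_max_left _ _
    have : Fab a b s₀ ≤ c + (2 / t - 2) - 4 / t := by
      unfold Fab; rw [← hc]; linarith
    have h2t : 2 * m ≤ 2 / t := by
      have h2 : 2 / t = 2 * (1 / t) := by ring
      rw [h2]; linarith
    have h4t : 4 / t = 2 * (2 / t) := by ring
    have : Fab a b s₀ ≤ c - 2 - 2 * m := by linarith
    linarith
  -- F b > 0
  have hFb : 0 < Fab a b b := by
    have hb4 : b < 4 * a * Real.exp (-1) := by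
      rw [div_lt_iff₀ h4a] at hr; linarith [hr]
    have hlog : Real.log b < c - 1 := by
      calc Real.log b < Real.log (4 * a * Real.exp (-1)) := Real.log_lt_log hb hb4
      _ = c - 1 := by rw [Real.log_mul h4a.ne' (Real.exp_ne_zero _), Real.log_exp]; ring
    unfold Fab
    rw [div_self hb.ne', ← hc]
    linarith
  -- F M < 0
  set M := max (4 * a) b + 1 with hM
  have hbM : b < M := by have := le_max_right (4 * a) b; linarith
  have h4aM : 4 * a < M := by have := le_max_left (4 * a) b; linarith
  have hMpos : 0 < M := lt_trans hb hbM
  have hFM : Fab a b M < 0 := by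
    have hlog : c < Real.log M := Real.log_lt_log h4a h4aM
    have : 0 < b / M := by positivity
    unfold Fab; rw [← hc]; linarith
  -- IVT
  obtain ⟨s₁, hs₁mem, hFs₁⟩ : ∃ s₁ ∈ Set.Ioo s₀ b, Fab a b s₁ = 0 := by
    have hsub : Set.Icc s₀ b ⊆ Set.Ioi 0 := fun x hx => lt_of_lt_of_le hs₀pos hx.1
    have := intermediate_value_Ioo hs₀b.le ((Fab_continuousOn a b).mono hsub)
      (Set.mem_Ioo.2 ⟨hFs₀, hFb⟩)
    obtain ⟨s₁, h1, h2⟩ := this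
    exact ⟨s₁, h1, h2⟩
  obtain ⟨s₂, hs₂mem, hFs₂⟩ : ∃ s₂ ∈ Set.Ioo b M, Fab a b s₂ = 0 := by
    have hsub : Set.Icc b M ⊆ Set.Ioi 0 := fun x hx => lt_of_lt_of_le hb hx.1
    have := intermediate_value_Ioo' hbM.le ((Fab_continuousOn a b).mono hsub)
      (Set.mem_Ioo.2 ⟨hFM, hFb⟩)
    obtain ⟨s₂, h1, h2⟩ := this
    exact ⟨s₂, h1, h2⟩
  obtain ⟨hs₀s₁, hs₁b⟩ := hs₁mem
  obtain ⟨hbs₂, hs₂M⟩ := hs₂mem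
  have hs₁pos : 0 < s₁ := lt_trans hs₀pos hs₀s₁
  have hmono := Fab_strictMonoOn a b hb
  have hanti := Fab_strictAntiOn a b hb
  refine ⟨s₁, s₂, hs₁pos, lt_trans hs₁b hbs₂,
    gab_zero_of_Fab_zero a b s₁ ha hs₁pos hFs₁,
    gab_zero_of_Fab_zero a b s₂ ha (lt_trans hb hbs₂) hFs₂, ?_, ?_⟩
  · rintro s (⟨hspos, hss₁⟩ | hs₂s)
    · apply gab_neg_of_Fab_neg a b s ha hspos
      have := hmono (Set.mem_Ioc.2 ⟨hspos, by linarith⟩)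
        (Set.mem_Ioc.2 ⟨hs₁pos, hs₁b.le⟩) hss₁
      linarith [hFs₁ ▸ this]
    · have hspos : 0 < s := lt_trans (lt_trans hb hbs₂) hs₂s
      apply gab_neg_of_Fab_neg a b s ha hspos
      have := hanti (Set.mem_Ici.2 hbs₂.le) (Set.mem_Ici.2 (by linarith)) hs₂s
      linarith [hFs₂ ▸ this]
  · intro s hs₁s hss₂
    have hspos : 0 < s := lt_trans hs₁pos hs₁s
    apply gab_pos_of_Fab_pos a b s ha hspos
    rcases le_total s b with hsb | hbs
    · have := hmono (Set.mem_Ioc.2 ⟨hs₁pos, hs₁b.le⟩)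
        (Set.mem_Ioc.2 ⟨hspos, hsb⟩) hs₁s
      linarith [hFs₁ ▸ this]
    · have := hanti (Set.mem_Ici.2 hbs) (Set.mem_Ici.2 (by linarith)) hss₂
      linarith [hFs₂ ▸ this]
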